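/- Let S = (B_1,...,B_ℓ) of [n] with n ∈ B_ℓ, written as blocks B_j = {b_1^j,...,b_{i_j}^j}. Then the set of points x ∈ R^n satisfying x_n = 0, 1 ≥ x_i for all i ∈ B_1, x_i = x_j for i,j in a common block, x_i ≥ x_j whenever i ∈ B_k, j ∈ B_{k+1}, and x_i = 0 for i ∈ B_ℓ, is exactly the convex hull of the ℓ points 0, e_{B_1}, e_{B_1∪B_2}, ..., e_{B_1∪...∪B_{ℓ-1}}. -/

import Mathlib

open Classical in
/-- For an ordered set partition `(B 0, ..., B ℓ)` of `[m+1]` with the last element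
in the last block, the set of points `x` with `x_n = 0`, `x_i ≤ 1` on the first
block, equal coordinates on each block, decreasing between consecutive blocks and
`x_i = 0` on the last block, is the convex hull of the points
`0, e_{B 0}, e_{B 0 ∪ B 1}, ...`. -/
theorem stmt9 {m ℓ : ℕ}
    (B : Fin (ℓ + 1) → Finset (Fin (m + 1)))
    (hdisj : ∀ k k' : Fin (ℓ + 1), k ≠ k' → Disjoint (B k) (B k'))
    (hne : ∀ k, (B k).Nonempty)
    (hcover : ∀ i : Fin (m + 1), ∃ k, i ∈ B k)
    (hlast : Fin.last m ∈ B (Fin.last ℓ))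
    (W : Fin (ℓ + 1) → (Fin (m + 1) → ℝ))
    (hW : ∀ (t : Fin (ℓ + 1)) (i : Fin (m + 1)),
      W t i = if ∃ s : Fin (ℓ + 1), s < t ∧ i ∈ B s then (1 : ℝ) else 0) :
    {x : Fin (m + 1) → ℝ | x (Fin.last m) = 0 ∧
        (∀ i ∈ B 0, x i ≤ 1) ∧
        (∀ k : Fin (ℓ + 1), ∀ i ∈ B k, ∀ j ∈ B k, x i = x j) ∧
        (∀ k : Fin ℓ, ∀ i ∈ B k.castSucc, ∀ j ∈ B k.succ, x j ≤ x i) ∧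
        (∀ i ∈ B (Fin.last ℓ), x i = 0)} =
      convexHull ℝ (Set.range W) := by
  have huniq : ∀ {i : Fin (m+1)} {k s : Fin (ℓ+1)}, i ∈ B k → i ∈ B s → s = k := by
    intro i k s hk hs
    by_contra h
    exact Finset.disjoint_left.mp (hdisj s k h) hs hk
  have hWval : ∀ (t k : Fin (ℓ+1)) (i : Fin (m+1)), i ∈ B k →
      W t i = if k < t then (1:ℝ) else 0 := by
    intro t k i hi
    rw [hW]
    congr 1
    simp only [eq_iff_iff]
    constructor
    · rintro ⟨s, hst, hs⟩; rwa [huniq hi hs] at hst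
    · intro h; exact ⟨k, h, hi⟩
  apply Set.Subset.antisymm
  · -- hard direction: the polytope is contained in the convex hull
    intro x hx
    obtain ⟨hx0, hx1, hxeq, hxmono, hxlast⟩ := hx
    have hxc : ∀ k, ∀ i ∈ B k, ∀ j ∈ B k, x i = x j := hxeq
    -- common value on each block
    set c : Fin (ℓ+1) → ℝ := fun k => x ((hne k).choose) with hc
    have hcx : ∀ k, ∀ i ∈ B k, x i = c k := fun k i hi =>
      hxeq k i hi _ ((hne k).choose_spec)
    set cb : ℕ → ℝ := fun t => if t = 0 then 1 else
      if h : t - 1 < ℓ + 1 then c ⟨t-1, h⟩ else 0 with hcb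
    have hcb0 : cb 0 = 1 := by simp [hcb]
    have hcbsucc : ∀ t (h : t < ℓ+1), cb (t+1) = c ⟨t, h⟩ := by
      intro t h; simp [hcb, h, Nat.lt_succ_iff.mp h]
    have hclast : c (Fin.last ℓ) = 0 := by
      rw [← hcx (Fin.last ℓ) _ ((hne (Fin.last ℓ)).choose_spec)]
      exact hxlast _ ((hne (Fin.last ℓ)).choose_spec)
    have hcbtop : cb (ℓ+1) = 0 := by
      rw [hcbsucc ℓ (Nat.lt_succ_self ℓ)]
      exact hclast
    set w : Fin (ℓ+1) → ℝ := fun t => cb t.val - cb (t.val+1) with hwdef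
    have hw0 : ∀ t, 0 ≤ w t := by
      intro t
      rcases t with ⟨tv, ht⟩
      cases tv with
      | zero =>
        have h1 : cb 1 = c ⟨0, ht⟩ := hcbsucc 0 ht
        have h2 : c ⟨0, ht⟩ ≤ 1 := by
          rw [← hcx _ _ ((hne _).choose_spec)]
          exact hx1 _ ((hne (⟨0, ht⟩ : Fin (ℓ+1))).choose_spec)
        simp only [hwdef, hcb0, h1]
        linarith
      | succ s =>
        have hs : s < ℓ := by omega
        have hs1 : s < ℓ + 1 := by omega
        have hs2 : s + 1 < ℓ + 1 := by omega
        have h1 : cb (s+1) = c ⟨s, hs1⟩ := hcbsucc s hs1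
        have h2 : cb (s+2) = c ⟨s+1, hs2⟩ := hcbsucc (s+1) hs2
        have hk : Fin.castSucc (⟨s, hs⟩ : Fin ℓ) = ⟨s, hs1⟩ := rfl
        have hk' : Fin.succ (⟨s, hs⟩ : Fin ℓ) = ⟨s+1, hs2⟩ := rfl
        have := hxmono ⟨s, hs⟩ _ (by rw [hk]; exact (hne (⟨s, hs1⟩ : Fin (ℓ+1))).choose_spec)
          _ (by rw [hk']; exact (hne (⟨s+1, hs2⟩ : Fin (ℓ+1))).choose_spec)
        rw [hcx _ _ ((hne (⟨s+1, hs2⟩ : Fin (ℓ+1))).choose_spec),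
          hcx _ _ ((hne (⟨s, hs1⟩ : Fin (ℓ+1))).choose_spec)] at this
        simp only [hwdef, h1, h2]
        linarith
    have hsum : ∑ t : Fin (ℓ+1), w t = 1 := by
      have := Fin.sum_univ_eq_sum_range (fun t => cb t - cb (t+1)) (ℓ+1)
      rw [show (∑ t : Fin (ℓ+1), w t) = ∑ t : Fin (ℓ+1),
        (fun (u : ℕ) => cb u - cb (u+1)) t.val from rfl, this,
        Finset.sum_range_sub' cb (ℓ+1), hcb0, hcbtop]
      norm_num
    have hrep : ∑ t : Fin (ℓ+1), w t • W t = x := by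
      funext i
      obtain ⟨k, hk⟩ := hcover i
      have : (∑ t : Fin (ℓ+1), w t • W t) i = ∑ t : Fin (ℓ+1), w t * W t i := by
        simp [Finset.sum_apply]
      rw [this]
      have heq : ∀ t : Fin (ℓ+1), w t * W t i =
          (fun (u : ℕ) => if k.val < u then cb u - cb (u+1) else 0) t.val := by
        intro t
        rw [hWval t k i hk]
        by_cases h : k < t
        · rw [if_pos h, mul_one]
          exact (if_pos (Fin.lt_iff_val_lt_val.mp h)).symm
        · rw [if_neg h, mul_zero]
          exact (if_neg (fun hh => h (Fin.lt_iff_val_lt_val.mpr hh))).symm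
      rw [Finset.sum_congr rfl (fun t _ => heq t),
        Fin.sum_univ_eq_sum_range (fun (u : ℕ) => if k.val < u then cb u - cb (u+1) else 0) (ℓ+1)]
      set hfun : ℕ → ℝ := fun t => if k.val < t then cb t else cb (k.val+1) with hhf
      have hterm : ∀ t, (if k.val < t then cb t - cb (t+1) else 0) = hfun t - hfun (t+1) := by
        intro t
        by_cases h1 : k.val < t
        · rw [if_pos h1]
          simp only [hhf]
          rw [if_pos h1, if_pos (by omega)]
        · rw [if_neg h1]
          by_cases h2 : k.val < t + 1
          · have : t = k.val := by omega
            subst this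
            simp only [hhf]
            rw [if_neg h1, if_pos h2]
            ring
          · simp only [hhf]
            rw [if_neg h1, if_neg h2]
            ring
      rw [Finset.sum_congr rfl (fun t _ => hterm t), Finset.sum_range_sub' hfun (ℓ+1)]
      have h0 : hfun 0 = cb (k.val + 1) := by
        simp only [hhf]; rw [if_neg (by omega)]
      have hl : hfun (ℓ+1) = cb (ℓ+1) := by
        simp only [hhf]; rw [if_pos (by omega : k.val < ℓ + 1)]
      rw [h0, hl, hcbtop, hcbsucc k.val k.isLt, sub_zero, Fin.eta]
      exact (hcx k i hk).symm
    have hmem := Finset.centerMass_mem_convexHull (Finset.univ : Finset (Fin (ℓ+1)))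
      (fun t _ => hw0 t) (by rw [hsum]; norm_num)
      (fun t _ => (Set.mem_range_self t : W t ∈ Set.range W))
    rwa [Finset.centerMass_eq_of_sum_1 _ _ hsum, hrep] at hmem
  · -- easy direction
    apply convexHull_min
    · rintro _ ⟨t, rfl⟩
      have hlt : ¬ Fin.last ℓ < t := not_lt.mpr (Fin.le_last t)
      refine ⟨?_, ?_, ?_, ?_, ?_⟩
      · rw [hWval t (Fin.last ℓ) _ hlast, if_neg hlt]
      · intro i hi
        rw [hWval t 0 i hi]
        split_ifs <;> norm_num
      · intro k i hi j hj
        rw [hWval t k i hi, hWval t k j hj]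
      · intro k i hi j hj
        rw [hWval t k.castSucc i hi, hWval t k.succ j hj]
        split_ifs with h1 h2
        · exact le_refl _
        · exact absurd ((Fin.castSucc_lt_succ : k.castSucc < k.succ).trans h1) h2
        · norm_num
        · exact le_refl _
      · intro i hi
        rw [hWval t (Fin.last ℓ) i hi, if_neg hlt]
    · intro x hx y hy a b ha hb hab
      obtain ⟨hx0, hx1, hxeq, hxmono, hxlast⟩ := hx
      obtain ⟨hy0, hy1, hyeq, hymono, hylast⟩ := hy
      refine ⟨?_, ?_, ?_, ?_, ?_⟩
      · simp only [Pi.add_apply, Pi.smul_apply, smul_eq_mul, hx0, hy0]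
        ring
      · intro i hi
        simp only [Pi.add_apply, Pi.smul_apply, smul_eq_mul]
        have := hx1 i hi
        have := hy1 i hi
        nlinarith
      · intro k i hi j hj
        simp only [Pi.add_apply, Pi.smul_apply, smul_eq_mul,
          hxeq k i hi j hj, hyeq k i hi j hj]
      · intro k i hi j hj
        simp only [Pi.add_apply, Pi.smul_apply, smul_eq_mul]
        have := hxmono k i hi j hj
        have := hymono k i hi j hj
        nlinarith
      · intro i hi
        simp only [Pi.add_apply, Pi.smul_apply, smul_eq_mul, hxlast i hi, hylast i hi]
        ring
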